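/- Extending homeomorphic embedding with the rule $f(s_1,\ldots,s_m) \unlhd g(t_1,\ldots,t_n)$ whenever both $f$ and $g$ are 'dynamic' symbols yields a well-binary relation on terms, provided the set of static function symbols is finite (while the set of dynamic symbols may be infinite). -/

import Mathlib

/-- First-order terms over a signature `F` indexed by arity, with variables. -/
inductive Tm (F : ℕ → Type) : Type
  | var : ℕ → Tm F
  | app : (n : ℕ) → F n → (Fin n → Tm F) → Tm F

/-- Homeomorphic embedding extended for dynamic function symbols: the signature
is partitioned by a predicate `Dyn` into dynamic and static symbols, and
`f(s₁,…,sₘ) ⊴ g(t₁,…,tₙ)` holds whenever both `f` and `g` are dynamic. -/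
inductive EmbD {F : ℕ → Type} (Dyn : ∀ n, F n → Prop) : Tm F → Tm F → Prop
  | var (x y : ℕ) : EmbD Dyn (.var x) (.var y)
  | dive {s : Tm F} {n : ℕ} (f : F n) (ts : Fin n → Tm F) (i : Fin n) :
      EmbD Dyn s (ts i) → EmbD Dyn s (.app n f ts)
  | couple {n : ℕ} (f : F n) (ss ts : Fin n → Tm F) :
      ¬ Dyn n f → (∀ i, EmbD Dyn (ss i) (ts i)) →
      EmbD Dyn (.app n f ss) (.app n f ts)
  | dyn {m n : ℕ} (f : F m) (g : F n) (ss : Fin m → Tm F) (ts : Fin n → Tm F) :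
      Dyn m f → Dyn n g → EmbD Dyn (.app m f ss) (.app n g ts)

namespace KruskalAux

/-- Inversion for `EmbD` with a variable on the right. -/
lemma embD_var_inv {F : ℕ → Type} {D : ∀ n, F n → Prop} {s : Tm F} {y : ℕ}
    (h : EmbD D s (.var y)) : ∃ x, s = .var x := by
  cases h with
  | var x => exact ⟨x, rfl⟩

/-- Inversion for `EmbD` with an application on the right. -/
lemma embD_app_inv {F : ℕ → Type} {D : ∀ n, F n → Prop} {s : Tm F} {n : ℕ}
    {f : F n} {ts : Fin n → Tm F} (h : EmbD D s (.app n f ts)) :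
    (∃ j, EmbD D s (ts j)) ∨
    (∃ ss, s = .app n f ss ∧ ¬ D n f ∧ ∀ i, EmbD D (ss i) (ts i)) ∨
    (∃ m g ss, s = .app m g ss ∧ D m g ∧ D n f) := by
  cases h
  case dive =>
    rename_i i h
    exact Or.inl ⟨i, h⟩
  case couple =>
    rename_i ss hd h
    exact Or.inr (Or.inl ⟨ss, rfl, hd, h⟩)
  case dyn =>
    rename_i m g ss hg hf
    exact Or.inr (Or.inr ⟨m, g, ss, rfl, hg, hf⟩)

variable {G : ℕ → Type}

/-- Plain homeomorphic embedding (no dynamic symbols). -/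
abbrev Emb : Tm G → Tm G → Prop := EmbD (fun _ _ => False)

lemma emb_refl (t : Tm G) : Emb t t := by
  induction t with
  | var x => exact .var x x
  | app n f ts ih => exact .couple f ts ts not_false fun i => ih i

lemma emb_trans {u s t : Tm G} (h1 : Emb s t) (h2 : Emb t u) : Emb s u := by
  induction h2 generalizing s with
  | var x y =>
    obtain ⟨a, rfl⟩ := embD_var_inv h1
    exact .var a y
  | dive f ts i h ih => exact .dive f ts i (ih h1)
  | couple f ss ts hd h ih =>
    rcases embD_app_inv h1 with ⟨j, h'⟩ | ⟨ss', rfl, -, h'⟩ | ⟨m, g, ss', rfl, hg, hf⟩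
    · exact .dive f ts j (ih j h')
    · exact .couple f ss' ts hd fun i => ih i (h' i)
    · exact hg.elim
  | dyn f g ss ts hf hg => exact hf.elim

def tmSize : Tm G → ℕ
  | .var _ => 1
  | .app n _ ts => 1 + ∑ i : Fin n, tmSize (ts i)

def children : Tm G → List (Tm G)
  | .var _ => []
  | .app _ _ ts => List.ofFn ts

def headSym : Tm G → Option (Σ n, G n)
  | .var _ => none
  | .app n f _ => some ⟨n, f⟩

lemma size_lt_of_mem_children {s t : Tm G} (h : s ∈ children t) : tmSize s < tmSize t := by
  cases t with
  | var x => simp [children] at h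
  | app n f ts =>
    simp only [children, List.mem_ofFn] at h
    obtain ⟨i, rfl⟩ := h
    have : tmSize (ts i) ≤ ∑ j : Fin n, tmSize (ts j) :=
      Finset.single_le_sum (f := fun j => tmSize (ts j)) (fun j _ => Nat.zero_le _)
        (Finset.mem_univ i)
    simp only [tmSize]; omega

lemma embD_of_mem_children {F : ℕ → Type} {D : ∀ n, F n → Prop} {s t u : Tm F}
    (h : t ∈ children u) (he : EmbD D s t) : EmbD D s u := by
  cases u with
  | var x => simp [children] at h
  | app n f ts =>
    simp only [children, List.mem_ofFn] at h
    obtain ⟨i, rfl⟩ := h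
    exact .dive f ts i he

/-- A bad sequence: no earlier term embeds into a later one. -/
def Bad (f : ℕ → Tm G) : Prop := ∀ i j : ℕ, i < j → ¬ Emb (f i) (f j)

/-- A finite sequence extendable to an infinite bad sequence. -/
def Ext {n : ℕ} (g : Fin n → Tm G) : Prop := ∃ f, Bad f ∧ ∀ i : Fin n, f i = g i

lemma ext_step {n : ℕ} {g : Fin n → Tm G} (h : Ext g) :
    ∃ u, Ext (Fin.snoc g u) ∧
      ∀ u', Ext (Fin.snoc g u') → tmSize u ≤ tmSize u' := by
  obtain ⟨f, hf, ha⟩ := h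
  have h0 : Ext (Fin.snoc g (f n)) := by
    refine ⟨f, hf, fun i => ?_⟩
    refine Fin.lastCases ?_ (fun j => ?_) i
    · simp
    · rw [Fin.snoc_castSucc]
      simpa using ha j
  have hS : {k | ∃ u, tmSize u = k ∧ Ext (Fin.snoc g u)}.Nonempty := ⟨_, f n, rfl, h0⟩
  obtain ⟨u, hu, hx⟩ := Nat.sInf_mem hS
  refine ⟨u, hx, fun u' h' => ?_⟩
  have hle : sInf {k | ∃ u, tmSize u = k ∧ Ext (Fin.snoc g u)} ≤ tmSize u' :=
    Nat.sInf_le ⟨u', rfl, h'⟩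
  omega

noncomputable def mbsChoice {n : ℕ} {g : Fin n → Tm G} (h : Ext g) :
    {u : Tm G // Ext (Fin.snoc g u) ∧ ∀ u', Ext (Fin.snoc g u') → tmSize u ≤ tmSize u'} :=
  Classical.indefiniteDescription _ (ext_step h)

noncomputable def mbsAux (t0 : ℕ → Tm G) (h0 : Bad t0) : (n : ℕ) → {g : Fin n → Tm G // Ext g}
  | 0 => ⟨Fin.elim0, t0, h0, fun i => i.elim0⟩
  | n+1 => ⟨Fin.snoc (mbsAux t0 h0 n).1 (mbsChoice (mbsAux t0 h0 n).2).1,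
           (mbsChoice (mbsAux t0 h0 n).2).2.1⟩

/-- The minimal bad sequence. -/
noncomputable def mbs (t0 : ℕ → Tm G) (h0 : Bad t0) (n : ℕ) : Tm G :=
  (mbsAux t0 h0 (n+1)).1 (Fin.last n)

lemma mbsAux_eq (t0 : ℕ → Tm G) (h0 : Bad t0) :
    ∀ {n : ℕ} (i : Fin n), (mbsAux t0 h0 n).1 i = mbs t0 h0 i := by
  intro n
  induction n with
  | zero => exact fun i => i.elim0
  | succ m ih =>
    intro i
    refine Fin.lastCases ?_ (fun j => ?_) i
    · rfl
    · show (mbsAux t0 h0 (m+1)).1 (Fin.castSucc j) = mbs t0 h0 (Fin.castSucc j : Fin (m+1))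
      simp only [mbsAux, Fin.snoc_castSucc, Fin.coe_castSucc]
      exact ih j

lemma mbs_bad (t0 : ℕ → Tm G) (h0 : Bad t0) : Bad (mbs t0 h0) := by
  intro i j hij he
  obtain ⟨f, hf, ha⟩ := (mbsAux t0 h0 (j+1)).2
  have hi : f i = mbs t0 h0 i := by
    have h := ha ⟨i, by omega⟩; rwa [mbsAux_eq] at h
  have hj : f j = mbs t0 h0 j := by
    have h := ha ⟨j, by omega⟩; rwa [mbsAux_eq] at h
  exact hf i j hij (by rw [hi, hj]; exact he)

lemma mbs_min (t0 : ℕ → Tm G) (h0 : Bad t0) {N : ℕ} {u : Tm G}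
    (h : Ext (Fin.snoc (mbsAux t0 h0 N).1 u)) :
    tmSize (mbs t0 h0 N) ≤ tmSize u := by
  have hmin := (mbsChoice (mbsAux t0 h0 N).2).2.2 u h
  have heq : mbs t0 h0 N = (mbsChoice (mbsAux t0 h0 N).2).1 := by
    show (mbsAux t0 h0 (N+1)).1 (Fin.last N) = _
    simp only [mbsAux, Fin.snoc_last]
  rw [heq]; exact hmin

lemma mbs_children_pwo (t0 : ℕ → Tm G) (h0 : Bad t0) :
    {s : Tm G | ∃ N, s ∈ children (mbs t0 h0 N)}.PartiallyWellOrderedOn Emb := by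
  rw [Set.partiallyWellOrderedOn_iff_exists_lt]
  intro u hu
  by_contra hbadu
  push_neg at hbadu
  simp only [Set.mem_setOf_eq] at hu
  choose N hN using hu
  have hrange : (Set.range N).Nonempty := ⟨N 0, 0, rfl⟩
  obtain ⟨k₀, hk₀⟩ := Nat.sInf_mem hrange
  set M := sInf (Set.range N) with hM
  have hMle : ∀ k, M ≤ N k := fun k => Nat.sInf_le ⟨k, rfl⟩
  set h : ℕ → Tm G := fun i => if i < M then mbs t0 h0 i else u (k₀ + (i - M)) with hdef
  have hbadh : Bad h := by
    intro i j hij he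
    by_cases hj : j < M
    · have hi : i < M := lt_trans hij hj
      simp only [hdef, if_pos hi, if_pos hj] at he
      exact mbs_bad t0 h0 i j hij he
    · push_neg at hj
      by_cases hi : i < M
      · simp only [hdef, if_pos hi, if_neg (not_lt.mpr hj)] at he
        have hemb := embD_of_mem_children (hN (k₀ + (j - M))) he
        exact mbs_bad t0 h0 i (N (k₀ + (j - M))) (lt_of_lt_of_le hi (hMle _)) hemb
      · push_neg at hi
        simp only [hdef, if_neg (not_lt.mpr hi), if_neg (not_lt.mpr hj)] at he
        exact hbadu (k₀ + (i - M)) (k₀ + (j - M)) (by omega) he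
  have hext : Ext (Fin.snoc (mbsAux t0 h0 M).1 (u k₀)) := by
    refine ⟨h, hbadh, fun i => ?_⟩
    refine Fin.lastCases ?_ (fun j => ?_) i
    · rw [Fin.snoc_last]
      simp [hdef]
    · rw [Fin.snoc_castSucc]
      simp only [hdef, Fin.coe_castSucc, if_pos j.isLt]
      exact (mbsAux_eq t0 h0 j).symm
  have hmin := mbs_min t0 h0 hext
  have hlt : tmSize (u k₀) < tmSize (mbs t0 h0 M) := by
    have hc := hN k₀; rw [hk₀] at hc
    exact size_lt_of_mem_children hc
  omega

lemma sublistForall₂_ofFn {n : ℕ} {ss ts : Fin n → Tm G}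
    (h : List.SublistForall₂ Emb (List.ofFn ss) (List.ofFn ts)) : ∀ i, Emb (ss i) (ts i) := by
  rw [List.sublistForall₂_iff] at h
  obtain ⟨l, hf, hs⟩ := h
  have hlen : l.length = (List.ofFn ts).length := by
    have h1 := hf.length_eq; simp only [List.length_ofFn] at h1 ⊢; omega
  have hl : l = List.ofFn ts := hs.eq_of_length hlen
  subst hl
  intro i
  obtain ⟨-, h2⟩ := List.forall₂_iff_get.mp hf
  have h3 := h2 i (by simp) (by simp)
  simpa [List.get_ofFn] using h3

lemma headSym_app {t : Tm G} {n : ℕ} {f : G n} (h : headSym t = some ⟨n, f⟩) :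
    ∃ ts, t = .app n f ts := by
  cases t with
  | var x => simp [headSym] at h
  | app m g ts =>
    simp only [headSym, Option.some.injEq] at h
    obtain ⟨rfl, h2⟩ := Sigma.mk.inj_iff.mp h
    rw [heq_iff_eq] at h2; subst h2
    exact ⟨ts, rfl⟩

lemma headSym_var {t : Tm G} (h : headSym t = none) : ∃ x, t = .var x := by
  cases t with
  | var x => exact ⟨x, rfl⟩
  | app m g ts => simp [headSym] at h

theorem kruskal (hfin : Finite ((n : ℕ) × G n)) (t : ℕ → Tm G) :
    ∃ i j, i < j ∧ Emb (t i) (t j) := by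
  by_contra hcon
  push_neg at hcon
  have h0 : Bad t := fun i j hij => hcon i j hij
  set g := mbs t h0 with hg
  have hgbad : Bad g := mbs_bad t h0
  haveI := hfin
  haveI : Finite (Option ((n : ℕ) × G n)) :=
    Finite.of_equiv (((n : ℕ) × G n) ⊕ PUnit.{1}) (Equiv.optionEquivSumPUnit ((n : ℕ) × G n)).symm
  obtain ⟨y, hy⟩ := Finite.exists_infinite_fiber (f := fun N => headSym (g N))
  have hyinf : {N | headSym (g N) = y}.Infinite := by
    rw [← Set.infinite_coe_iff]
    have hpre : (fun N => headSym (g N)) ⁻¹' {y} = {N | headSym (g N) = y} := by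
      ext N; simp
    rwa [hpre] at hy
  set φ := Nat.nth (fun N => headSym (g N) = y) with hφ
  have hmono : StrictMono φ := Nat.nth_strictMono hyinf
  have hmem : ∀ k, headSym (g (φ k)) = y := fun k => Nat.nth_mem_of_infinite hyinf k
  cases y with
  | none =>
    obtain ⟨x0, hx0⟩ := headSym_var (hmem 0)
    obtain ⟨x1, hx1⟩ := headSym_var (hmem 1)
    exact hgbad (φ 0) (φ 1) (hmono Nat.zero_lt_one) (by rw [hx0, hx1]; exact .var x0 x1)
  | some p =>
    obtain ⟨n, f⟩ := p
    haveI : IsRefl (Tm G) Emb := ⟨emb_refl⟩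
    haveI : IsTrans (Tm G) Emb := ⟨fun a b c h1 h2 => emb_trans h1 h2⟩
    haveI : IsPreorder (Tm G) Emb := { refl := emb_refl, trans := fun a b c h1 h2 => emb_trans h1 h2 }
    have hC := mbs_children_pwo t h0
    have hH := Set.PartiallyWellOrderedOn.partiallyWellOrderedOn_sublistForall₂ Emb hC
    obtain ⟨a, b, hab, hsub⟩ := hH.exists_lt (f := fun k => children (g (φ k)))
      (fun k x hx => ⟨φ k, hx⟩)
    obtain ⟨ss, hss⟩ := headSym_app (hmem a)
    obtain ⟨ts, hts⟩ := headSym_app (hmem b)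
    have hpt : ∀ i, Emb (ss i) (ts i) := by
      apply sublistForall₂_ofFn
      rw [hss, hts] at hsub
      simpa only [children] using hsub
    exact hgbad (φ a) (φ b) (hmono hab)
      (by rw [hss, hts]; exact .couple f ss ts not_false hpt)

section Collapse

variable {F : ℕ → Type} (Dyn : ∀ n, F n → Prop)

/-- The collapsed signature: static symbols, plus one fresh constant. -/
def CSig (n : ℕ) : Type := {f : F n // ¬ Dyn n f} ⊕ PLift (n = 0)

open Classical in
/-- Collapse a term: dynamic applications become a fresh constant. -/
noncomputable def collapse : Tm F → Tm (CSig Dyn)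
  | .var x => .var x
  | .app n f ts =>
    if h : Dyn n f then .app 0 (Sum.inr ⟨rfl⟩) Fin.elim0
    else .app n (Sum.inl ⟨f, h⟩) (fun i => collapse (ts i))

lemma csig_finite (hstatic : Finite {s : Σ n, F n // ¬ Dyn s.1 s.2}) :
    Finite ((n : ℕ) × CSig Dyn n) := by
  haveI := hstatic
  apply Finite.of_injective
    (β := {s : Σ n, F n // ¬ Dyn s.1 s.2} ⊕ PUnit.{1})
    (fun p => match p with
      | ⟨n, Sum.inl f⟩ => Sum.inl ⟨⟨n, f.1⟩, f.2⟩
      | ⟨_, Sum.inr _⟩ => Sum.inr PUnit.unit)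
  rintro ⟨n, x⟩ ⟨m, y⟩ h
  cases x with
  | inl f =>
    cases y with
    | inl g =>
      simp only [Sum.inl.injEq, Subtype.mk.injEq] at h
      obtain ⟨rfl, h2⟩ := Sigma.mk.inj_iff.mp h
      rw [heq_iff_eq] at h2
      rw [Subtype.ext h2]
    | inr p => simp at h
  | inr p =>
    cases y with
    | inl g => simp at h
    | inr q =>
      obtain ⟨hp⟩ := p
      obtain ⟨hq⟩ := q
      subst hp; subst hq; rfl

lemma collapse_var_inv {s : Tm F} {x : ℕ} (h : collapse Dyn s = .var x) : s = .var x := by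
  cases s with
  | var y =>
    simp only [collapse, Tm.var.injEq] at h
    rw [h]
  | app n f ts =>
    by_cases hd : Dyn n f <;> simp [collapse, hd] at h

lemma collapse_app_inr_inv {s : Tm F} {e : PLift (0 = 0)} {ts0 : Fin 0 → Tm (CSig Dyn)}
    (h : collapse Dyn s = .app 0 (Sum.inr e) ts0) :
    ∃ m g ss, s = .app m g ss ∧ Dyn m g := by
  cases s with
  | var y => simp [collapse] at h
  | app m f ts =>
    by_cases hd : Dyn m f
    · exact ⟨m, f, ts, rfl, hd⟩
    · simp only [collapse, dif_neg hd] at h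
      injection h with h1 h2 h3
      subst h1
      replace h2 := eq_of_heq h2
      simp at h2

lemma collapse_app_inl_inv {s : Tm F} {n : ℕ} {g : F n} {hg : ¬ Dyn n g}
    {cs : Fin n → Tm (CSig Dyn)}
    (h : collapse Dyn s = .app n (Sum.inl ⟨g, hg⟩) cs) :
    ∃ ss, s = .app n g ss ∧ cs = fun i => collapse Dyn (ss i) := by
  cases s with
  | var y => simp [collapse] at h
  | app m f ts =>
    by_cases hd : Dyn m f
    · simp only [collapse, dif_pos hd] at h
      injection h with h1 h2 h3
      subst h1
      replace h2 := eq_of_heq h2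
      simp at h2
    · simp only [collapse, dif_neg hd] at h
      injection h with h1 h2 h3
      subst h1
      replace h2 := eq_of_heq h2; replace h3 := eq_of_heq h3
      obtain ⟨rfl, -⟩ : f = g ∧ True := by
        have := Sum.inl.inj h2
        exact ⟨congrArg Subtype.val this, trivial⟩
      exact ⟨ts, rfl, h3.symm⟩

lemma embD_of_collapse : ∀ {t s : Tm F}, Emb (collapse Dyn s) (collapse Dyn t) → EmbD Dyn s t := by
  intro t
  induction t with
  | var y =>
    intro s h
    rw [show collapse Dyn (.var y) = .var y from rfl] at h
    obtain ⟨x, hx⟩ := embD_var_inv h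
    rw [collapse_var_inv Dyn hx]
    exact .var x y
  | app n g ts ih =>
    intro s h
    by_cases hg : Dyn n g
    · rw [show collapse Dyn (.app n g ts) = .app 0 (Sum.inr ⟨rfl⟩) Fin.elim0 from by
        simp [collapse, hg]] at h
      rcases embD_app_inv h with ⟨j, -⟩ | ⟨ss0, hs, -, -⟩ | ⟨m, g', ss', -, hf, -⟩
      · exact j.elim0
      · obtain ⟨m, f, ss, rfl, hDf⟩ := collapse_app_inr_inv Dyn hs
        exact .dyn f g ss ts hDf hg
      · exact hf.elim
    · rw [show collapse Dyn (.app n g ts)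
          = .app n (Sum.inl ⟨g, hg⟩) (fun i => collapse Dyn (ts i)) from by
        simp [collapse, hg]] at h
      rcases embD_app_inv h with ⟨j, hj⟩ | ⟨ss0, hs, -, hpt⟩ | ⟨m, g', ss', -, hf, -⟩
      · exact .dive g ts j (ih j hj)
      · obtain ⟨ss, rfl, hcs⟩ := collapse_app_inl_inv Dyn hs
        refine .couple g ss ts hg fun i => ih i ?_
        have hp := hpt i
        rw [hcs] at hp
        exact hp
      · exact hf.elim

end Collapse

end KruskalAux

/-- if the set of static function symbols is finite (while there
may be infinitely many dynamic symbols), the extended homeomorphic embedding is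
a well-binary relation: every infinite sequence of terms contains `i < j` with
`t i ⊴ t j`. -/
theorem embD_wbr {F : ℕ → Type} (Dyn : ∀ n, F n → Prop)
    (hstatic : Finite {s : Σ n, F n // ¬ Dyn s.1 s.2}) :
    ∀ t : ℕ → Tm F, ∃ i j, i < j ∧ EmbD Dyn (t i) (t j) := by
  intro t
  obtain ⟨i, j, hij, h⟩ :=
    KruskalAux.kruskal (KruskalAux.csig_finite Dyn hstatic)
      (fun k => KruskalAux.collapse Dyn (t k))
  exact ⟨i, j, hij, KruskalAux.embD_of_collapse Dyn h⟩
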